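/- Let α > 0 and let X be a nonnegative random variable such that h(t) := t^α P(X ≥ t) is log-concave on [b, ∞), unbounded (i.e., there is a sequence tₙ → ∞ with h(tₙ) → ∞), and ∫₀^r y^{α−1} P(X ≥ y) dy ≤ C₃ log r for all r ≥ e. Then h(r) ≤ C₃ for all r ≥ e. -/

import Mathlib

open MeasureTheory Real Filter

/-- If h(t) = t^α P(X ≥ t) is log-concave on [b,∞) (b = ess inf X) and unbounded along a
sequence tending to infinity, and ∫₀^r y^{α−1} P(X ≥ y) dy ≤ C₃ log r for all r ≥ e, then
h(r) ≤ C₃ for all r ≥ e. -/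
theorem logconcave_unbounded_tail_bound {Ω : Type*} [MeasurableSpace Ω] (μ : Measure Ω)
    [IsProbabilityMeasure μ]
    (X : Ω → ℝ) (hX : Measurable X) (hXnn : ∀ ω, 0 ≤ X ω) (α b C₃ : ℝ)
    (hα : 0 < α) (hC₃ : 0 < C₃) (hb : b = essInf X μ)
    (h : ℝ → ℝ) (hdef : ∀ t, h t = t ^ α * (μ {ω | t ≤ X ω}).toReal)
    (hconc : ConcaveOn ℝ (Set.Ici b) (fun t => Real.log (h t)))
    (hunbdd : ∃ t : ℕ → ℝ, Tendsto t atTop atTop ∧ Tendsto (fun n => h (t n)) atTop atTop)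
    (hint : ∀ r ≥ Real.exp 1,
      ∫ y in Set.Ioc (0 : ℝ) r, y ^ (α - 1) * (μ {ω | y ≤ X ω}).toReal ≤ C₃ * Real.log r) :
    ∀ r ≥ Real.exp 1, h r ≤ C₃ := by
  obtain ⟨t, ht_top, ht_h⟩ := hunbdd
  set p : ℝ → ℝ := fun s => (μ {ω | s ≤ X ω}).toReal with hp
  -- p is antitone
  have hp_anti : Antitone p := by
    intro s u hsu
    apply ENNReal.toReal_mono (measure_ne_top μ _)
    exact measure_mono (fun ω hw => le_trans hsu hw)
  have hp_nonneg : ∀ s, 0 ≤ p s := fun s => ENNReal.toReal_nonneg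
  have hp_le_one : ∀ s, p s ≤ 1 := by
    intro s
    rw [show (1:ℝ) = (μ Set.univ).toReal by simp]
    exact ENNReal.toReal_mono (measure_ne_top μ _) (measure_mono (Set.subset_univ _))
  -- p is positive everywhere
  have hp_pos : ∀ s, 0 < p s := by
    intro s
    have h1 : ∀ᶠ n in atTop, s ≤ t n := ht_top.eventually_ge_atTop s
    have h2 : ∀ᶠ n in atTop, 1 ≤ h (t n) := ht_h.eventually_ge_atTop 1
    obtain ⟨n, hn1, hn2⟩ := (h1.and h2).exists
    have hpn : 0 < p (t n) := by
      rcases lt_or_eq_of_le (hp_nonneg (t n)) with h' | h'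
      · exact h'
      · exfalso
        have heq : h (t n) = t n ^ α * p (t n) := hdef _
        rw [← h', mul_zero] at heq
        linarith
    exact lt_of_lt_of_le hpn (hp_anti hn1)
  have hh_pos : ∀ s, 0 < s → 0 < h s := by
    intro s hs
    rw [hdef]
    exact mul_pos (Real.rpow_pos_of_pos hs α) (hp_pos s)
  -- log h is nondecreasing on [b, ∞)
  have hlog_mono : ∀ x y, b ≤ x → x ≤ y → Real.log (h x) ≤ Real.log (h y) := by
    intro x y hbx hxy
    rcases eq_or_lt_of_le hxy with rfl | hxy
    · exact le_refl _
    by_contra hc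
    push_neg at hc
    -- show log h z ≤ log h y for all z ≥ y
    have key : ∀ z, y ≤ z → Real.log (h z) ≤ Real.log (h y) := by
      intro z hyz
      rcases eq_or_lt_of_le hyz with rfl | hyz
      · exact le_refl _
      set lam := (y - x) / (z - x) with hlam
      have hzx : 0 < z - x := by linarith
      have hlam_pos : 0 < lam := div_pos (by linarith) hzx
      have hlam_lt : lam < 1 := by
        rw [div_lt_one hzx]; linarith
      have hcomb : (1 - lam) • x + lam • z = y := by
        rw [smul_eq_mul, smul_eq_mul, hlam]
        calc (1 - (y - x) / (z - x)) * x + (y - x) / (z - x) * z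
            = x + (y - x) / (z - x) * (z - x) := by ring
          _ = x + (y - x) := by rw [div_mul_cancel₀ _ hzx.ne']
          _ = y := by ring
      have hcc := hconc.2 (Set.mem_Ici.mpr hbx) (Set.mem_Ici.mpr (by linarith : b ≤ z))
        (by linarith : (0:ℝ) ≤ 1 - lam) (le_of_lt hlam_pos) (by ring)
      rw [hcomb] at hcc
      simp only [smul_eq_mul] at hcc
      have h1 : (1 - lam) * Real.log (h y) ≤ (1 - lam) * Real.log (h x) :=
        mul_le_mul_of_nonneg_left hc.le (by linarith)
      have h2 : lam * Real.log (h z) ≤ lam * Real.log (h y) := by linarith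
      exact le_of_mul_le_mul_left h2 hlam_pos
    have h3 : ∀ᶠ n in atTop, y ≤ t n := ht_top.eventually_ge_atTop y
    have h4 : Tendsto (fun n => Real.log (h (t n))) atTop atTop :=
      Real.tendsto_log_atTop.comp ht_h
    have h5 : ∀ᶠ n in atTop, Real.log (h y) < Real.log (h (t n)) :=
      h4.eventually_gt_atTop _
    obtain ⟨n, hn1, hn2⟩ := (h3.and h5).exists
    exact absurd (key (t n) hn1) (not_le.mpr hn2)
  -- ae bound from essInf
  have hae : ∀ᵐ ω ∂μ, b ≤ X ω := by
    rw [hb]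
    exact ae_essInf_le ⟨0, Filter.eventually_map.mpr (Filter.Eventually.of_forall hXnn)⟩
  have hp_one : ∀ s, s ≤ b → p s = 1 := by
    intro s hsb
    have : μ {ω | s ≤ X ω} = 1 := by
      rw [← measure_univ (μ := μ)]
      apply measure_congr
      filter_upwards [hae] with ω hw
      show (s ≤ X ω) = (ω ∈ Set.univ)
      simp [le_trans hsb hw]
    simp [hp, this]
  -- h is nondecreasing on [e, ∞)
  have he_pos : (0:ℝ) < Real.exp 1 := Real.exp_pos 1
  have hmono : ∀ x y, Real.exp 1 ≤ x → x ≤ y → h x ≤ h y := by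
    intro x y hex hxy
    have hx_pos : 0 < x := lt_of_lt_of_le he_pos hex
    have hy_pos : 0 < y := lt_of_lt_of_le hx_pos hxy
    have key : ∀ u v, b ≤ u → 0 < u → u ≤ v → h u ≤ h v := by
      intro u v hbu hu huv
      have hv : 0 < v := lt_of_lt_of_le hu huv
      exact (Real.log_le_log_iff (hh_pos u hu) (hh_pos v hv)).mp (hlog_mono u v hbu huv)
    rcases le_or_gt b x with hbx | hxb
    · exact key x y hbx hx_pos hxy
    · -- x < b
      have hpx : p x = 1 := hp_one x hxb.le
      rcases le_or_gt y b with hyb | hby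
      · have hpy : p y = 1 := hp_one y hyb
        have e1 : h x = x ^ α * p x := hdef x
        have e2 : h y = y ^ α * p y := hdef y
        rw [e1, e2, hpx, hpy, mul_one, mul_one]
        exact Real.rpow_le_rpow hx_pos.le hxy hα.le
      · have hb_pos : 0 < b := lt_trans hx_pos hxb
        have h1 : h b ≤ h y := key b y le_rfl hb_pos hby.le
        have h2 : h x ≤ h b := by
          have e1 : h x = x ^ α * p x := hdef x
          have e2 : h b = b ^ α * p b := hdef b
          rw [e1, e2, hpx, hp_one b le_rfl, mul_one, mul_one]
          exact Real.rpow_le_rpow hx_pos.le hxb.le hα.le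
        linarith
  -- measurability of p
  have hp_meas : Measurable p := hp_anti.measurable
  -- main estimate: for T ≥ r ≥ e, h r * (log T - log r) ≤ C₃ * log T
  have main : ∀ r, Real.exp 1 ≤ r → ∀ T, r ≤ T →
      h r * (Real.log T - Real.log r) ≤ C₃ * Real.log T := by
    intro r hr T hrT
    have hr_pos : 0 < r := lt_of_lt_of_le he_pos hr
    have hT_pos : 0 < T := lt_of_lt_of_le hr_pos hrT
    set g : ℝ → ℝ := fun y => y ^ (α - 1) * p y with hg
    have hg_meas : Measurable g := by
      apply Measurable.mul _ hp_meas
      fun_prop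
    -- integrability of g on Ioc 0 T
    have hrpow_int : IntegrableOn (fun y : ℝ => y ^ (α - 1)) (Set.Ioc 0 T) := by
      have := intervalIntegral.intervalIntegrable_rpow' (a := 0) (b := T)
        (r := α - 1) (by linarith : (-1:ℝ) < α - 1)
      exact (intervalIntegrable_iff_integrableOn_Ioc_of_le hT_pos.le).mp this
    have hg_int : IntegrableOn g (Set.Ioc 0 T) := by
      apply Integrable.mono hrpow_int (hg_meas.aestronglyMeasurable.restrict)
      filter_upwards [ae_restrict_mem measurableSet_Ioc] with y hy
      have hy0 : 0 < y := hy.1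
      rw [Real.norm_eq_abs, Real.norm_eq_abs, abs_of_nonneg (Real.rpow_nonneg hy0.le _),
        abs_of_nonneg (mul_nonneg (Real.rpow_nonneg hy0.le _) (hp_nonneg y))]
      nth_rewrite 2 [← mul_one (y ^ (α - 1))]
      exact mul_le_mul_of_nonneg_left (hp_le_one y) (Real.rpow_nonneg hy0.le _)
    -- lower bound on Ioc r T
    have hlow : ∀ y ∈ Set.Ioc r T, h r * y⁻¹ ≤ g y := by
      intro y hy
      have hy_pos : 0 < y := lt_trans hr_pos hy.1
      have hgy : g y = h y * y⁻¹ := by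
        have e1 : h y = y ^ α * p y := hdef y
        show y ^ (α - 1) * p y = h y * y⁻¹
        rw [e1, show α - 1 = α + (-1) by ring, Real.rpow_add hy_pos, Real.rpow_neg_one]
        ring
      rw [hgy]
      exact mul_le_mul_of_nonneg_right (hmono r y hr hy.1.le) (inv_nonneg.mpr hy_pos.le)
    have hinv_int : IntegrableOn (fun y : ℝ => h r * y⁻¹) (Set.Ioc r T) := by
      apply IntegrableOn.mono_set _ (Set.Ioc_subset_Icc_self (a := r) (b := T))
      apply ContinuousOn.integrableOn_compact isCompact_Icc
      apply continuousOn_const.mul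
      apply ContinuousOn.inv₀ continuousOn_id
      exact fun y hy => ne_of_gt (lt_of_lt_of_le hr_pos hy.1)
    have step1 : ∫ y in Set.Ioc r T, h r * y⁻¹ ≤ ∫ y in Set.Ioc r T, g y :=
      setIntegral_mono_on hinv_int (hg_int.mono_set (Set.Ioc_subset_Ioc hr_pos.le le_rfl))
        measurableSet_Ioc hlow
    have step0 : ∫ y in Set.Ioc r T, h r * y⁻¹ = h r * (Real.log T - Real.log r) := by
      rw [MeasureTheory.integral_const_mul]
      congr 1
      have heq : ∫ y in r..T, y⁻¹ = ∫ y in Set.Ioc r T, y⁻¹ := by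
        rw [intervalIntegral.intervalIntegral_eq_integral_uIoc, if_pos hrT,
          Set.uIoc_of_le hrT, one_smul]
      rw [← heq, integral_inv_of_pos hr_pos hT_pos, Real.log_div hT_pos.ne' hr_pos.ne']
    have step2 : ∫ y in Set.Ioc r T, g y ≤ ∫ y in Set.Ioc 0 T, g y := by
      apply setIntegral_mono_set hg_int
      · filter_upwards [ae_restrict_mem measurableSet_Ioc] with y hy
        exact mul_nonneg (Real.rpow_nonneg hy.1.le _) (hp_nonneg y)
      · exact HasSubset.Subset.eventuallyLE (Set.Ioc_subset_Ioc hr_pos.le le_rfl)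
    have step3 : ∫ y in Set.Ioc 0 T, g y ≤ C₃ * Real.log T :=
      hint T (le_trans hr hrT)
    linarith [step0 ▸ step1]
  -- conclude
  intro r hr
  by_contra hc
  push_neg at hc
  have hr_pos : 0 < r := lt_of_lt_of_le he_pos hr
  have hlogr : 1 ≤ Real.log r := by
    rw [show (1:ℝ) = Real.log (Real.exp 1) by simp]
    exact Real.log_le_log he_pos hr
  set M := h r * Real.log r / (h r - C₃) with hM
  set T := Real.exp (max (Real.log r) M + 1) with hT
  have hlogT : Real.log T = max (Real.log r) M + 1 := Real.log_exp _
  have hrT : r ≤ T := by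
    rw [← Real.exp_log hr_pos]
    apply Real.exp_le_exp.mpr
    have := le_max_left (Real.log r) M
    linarith
  have hmain := main r hr T hrT
  rw [hlogT] at hmain
  have hMle : max (Real.log r) M ≥ M := le_max_right _ _
  have hrle : max (Real.log r) M ≥ Real.log r := le_max_left _ _
  have hhr_pos : 0 < h r := hh_pos r hr_pos
  have hdiff : 0 < h r - C₃ := by linarith
  have hMval : M * (h r - C₃) = h r * Real.log r := by
    rw [hM]; field_simp
  nlinarith [hmain, hMle, hrle, hMval, mul_pos hhr_pos hdiff]
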